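/- For every real number a and every ε ∈ {1, −1}, the improper Riemann integral lim_{R→∞} ∫_{−R}^{R} e^{i a η − i ε η²} dη exists and equals √π · e^{−iεπ/4} · e^{iεa²/4}. -/

import Mathlib

open MeasureTheory Filter

section FresnelHelpers
open Complex intervalIntegral

lemma cexp_sq_cont (b : ℂ) : Continuous fun u : ℝ => Complex.exp (-b * (u:ℂ)^2) := by
  fun_prop

lemma cexp_sq_norm_le {b : ℂ} (hre : 0 ≤ b.re) (u : ℝ) :
    ‖Complex.exp (-b * (u:ℂ)^2)‖ ≤ 1 := by
  rw [Complex.norm_exp]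
  have h : (-b * (u:ℂ)^2).re = -(b.re * u^2) := by
    simp [Complex.mul_re, ← Complex.ofReal_pow]
  rw [h, Real.exp_le_one_iff]
  have : 0 ≤ b.re * u^2 := mul_nonneg hre (sq_nonneg u)
  linarith

lemma tail_bound {b : ℂ} (hre : 0 ≤ b.re) (hb1 : 1 ≤ ‖b‖)
    {R S : ℝ} (hR : 1 ≤ R) (hRS : R ≤ S) :
    ‖∫ u in R..S, Complex.exp (-b * (u:ℂ)^2)‖ ≤ 1 / R := by
  have hR0 : 0 < R := lt_of_lt_of_le one_pos hR
  have hS0 : 0 < S := lt_of_lt_of_le hR0 hRS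
  have hb0 : b ≠ 0 := by
    intro h; rw [h, norm_zero] at hb1; linarith
  have hne : ∀ u ∈ Set.uIcc R S, (u:ℝ) ≠ 0 := by
    intro u hu
    rw [Set.uIcc_of_le hRS] at hu
    exact ne_of_gt (lt_of_lt_of_le hR0 hu.1)
  -- derivative of g u = exp(-b u^2) / u
  have hderiv : ∀ u ∈ Set.uIcc R S,
      HasDerivAt (fun u : ℝ => Complex.exp (-b * (u:ℂ)^2) / u)
        (-2 * b * Complex.exp (-b * (u:ℂ)^2) - Complex.exp (-b * (u:ℂ)^2) / (u:ℂ)^2) u := by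
    intro u hu
    have hu0 : (u:ℝ) ≠ 0 := hne u hu
    have h1 : HasDerivAt (fun u : ℝ => Complex.exp (-b * (u:ℂ)^2))
        (Complex.exp (-b * (u:ℂ)^2) * (-b * (2*u))) u := by
      have hin : HasDerivAt (fun u : ℝ => -b * (u:ℂ)^2) (-b * (2*u)) u := by
        have := ((hasDerivAt_id (u:ℂ)).pow 2).comp_ofReal
        simpa [mul_comm] using (this.const_mul (-b))
      exact hin.cexp
    have h2 : HasDerivAt (fun u : ℝ => ((u:ℂ))⁻¹) (-((u:ℂ)^2)⁻¹) u := by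
      have := (hasDerivAt_inv (by exact_mod_cast hu0 : (u:ℂ) ≠ 0)).comp_ofReal
      simpa using this
    have := h1.mul h2
    convert this using 1
    · rfl
    · funext x; simp [div_eq_mul_inv]
    have hu0' : (u:ℂ) ≠ 0 := by exact_mod_cast hu0
    field_simp
    ring
  have hcontA : Continuous (fun u : ℝ => -2 * b * Complex.exp (-b * (u:ℂ)^2)) :=
    continuous_const.mul (cexp_sq_cont b)
  have hcontB : ContinuousOn (fun u : ℝ => Complex.exp (-b * (u:ℂ)^2) / (u:ℂ)^2) (Set.uIcc R S) := by
    apply ContinuousOn.div ((cexp_sq_cont b)).continuousOn (by fun_prop)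
    intro u hu
    exact pow_ne_zero 2 (by exact_mod_cast hne u hu)
  have hFTC := intervalIntegral.integral_eq_sub_of_hasDerivAt hderiv
    ((hcontA.continuousOn.sub hcontB).intervalIntegrable)
  rw [intervalIntegral.integral_sub (hcontA.intervalIntegrable R S)
    (hcontB.intervalIntegrable), intervalIntegral.integral_const_mul] at hFTC
  -- solve for the integral
  have key : (∫ u in R..S, Complex.exp (-b * (u:ℂ)^2))
      = (Complex.exp (-b * (R:ℂ)^2) / R - Complex.exp (-b * (S:ℂ)^2) / S
          - ∫ u in R..S, Complex.exp (-b * (u:ℂ)^2) / (u:ℂ)^2) / (2 * b) := by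
    rw [eq_div_iff (by simpa using hb0)]
    linear_combination -hFTC
  rw [key]
  have h0ni : (0:ℝ) ∉ Set.uIcc R S := by
    rw [Set.uIcc_of_le hRS]
    intro h
    exact absurd h.1 (by linarith)
  have hIcalc : ∫ u in R..S, (u:ℝ) ^ (-2 : ℤ) = 1/R - 1/S := by
    rw [integral_zpow (Or.inr ⟨by decide, h0ni⟩)]
    have : (-2 : ℤ) + 1 = -1 := by decide
    rw [this]
    push_cast
    rw [zpow_neg_one, zpow_neg_one]
    field_simp
    ring
  have hB : ‖∫ u in R..S, Complex.exp (-b * (u:ℂ)^2) / (u:ℂ)^2‖ ≤ 1/R - 1/S := by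
    rw [← hIcalc]
    apply intervalIntegral.norm_integral_le_of_norm_le hRS
    · filter_upwards with t ht
      have ht0 : 0 < t := lt_trans hR0 ht.1
      rw [norm_div]
      have h1 : ‖((t:ℂ))^2‖ = t^2 := by
        rw [← Complex.ofReal_pow, Complex.norm_real, Real.norm_eq_abs, abs_of_pos (by positivity)]
      have h2 : (t:ℝ)^(-2:ℤ) = 1 / t^2 := by
        have h3 : (t:ℝ)^(2:ℤ) = t^2 := (zpow_two t).trans (sq t).symm
        rw [zpow_neg, h3, one_div]
      rw [h1, h2]
      gcongr
      exact cexp_sq_norm_le hre t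
    · apply ContinuousOn.intervalIntegrable
      apply ContinuousOn.zpow₀ continuousOn_id
      intro u hu
      exact Or.inl (hne u hu)
  -- final bound
  rw [norm_div]
  have hnb : ‖(2 : ℂ) * b‖ = 2 * ‖b‖ := by
    simp
  have hX : ‖Complex.exp (-b * (R:ℂ)^2) / R - Complex.exp (-b * (S:ℂ)^2) / S
      - ∫ u in R..S, Complex.exp (-b * (u:ℂ)^2) / (u:ℂ)^2‖ ≤ 2 / R := by
    have e1 : ‖Complex.exp (-b * (R:ℂ)^2) / (R:ℂ)‖ ≤ 1/R := by
      rw [norm_div, Complex.norm_real, Real.norm_eq_abs, abs_of_pos hR0]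
      gcongr
      exact cexp_sq_norm_le hre R
    have e2 : ‖Complex.exp (-b * (S:ℂ)^2) / (S:ℂ)‖ ≤ 1/S := by
      rw [norm_div, Complex.norm_real, Real.norm_eq_abs, abs_of_pos hS0]
      gcongr
      exact cexp_sq_norm_le hre S
    calc _ ≤ ‖Complex.exp (-b * (R:ℂ)^2) / (R:ℂ) - Complex.exp (-b * (S:ℂ)^2) / S‖
          + ‖∫ u in R..S, Complex.exp (-b * (u:ℂ)^2) / (u:ℂ)^2‖ := norm_sub_le _ _
      _ ≤ (1/R + 1/S) + (1/R - 1/S) := by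
          gcongr
          exact (norm_sub_le _ _).trans (add_le_add e1 e2)
      _ = 2/R := by ring
  have hnb2 : (2:ℝ) ≤ ‖(2:ℂ) * b‖ := by
    rw [hnb]; nlinarith [norm_nonneg b]
  calc ‖Complex.exp (-b * (R:ℂ)^2) / R - Complex.exp (-b * (S:ℂ)^2) / S
      - ∫ u in R..S, Complex.exp (-b * (u:ℂ)^2) / (u:ℂ)^2‖ / ‖(2:ℂ)*b‖
      ≤ (2/R) / 2 := div_le_div₀ (by positivity) hX two_pos hnb2
    _ = 1/R := by ring

section core
variable {ε : ℝ}

lemma b_re (δ : ℝ) (ε : ℝ) : ((δ:ℂ) + Complex.I * ε).re = δ := by simp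

lemma b_abs (hε : ε = 1 ∨ ε = -1) (δ : ℝ) : 1 ≤ ‖(δ:ℂ) + Complex.I * ε‖ := by
  have h : ‖(δ:ℂ) + Complex.I * ε‖ ^ 2 = δ^2 + ε^2 := by
    rw [Complex.sq_norm, Complex.normSq_apply]
    simp
    ring
  have hε2 : ε^2 = 1 := by rcases hε with h'|h' <;> simp [h']
  nlinarith [norm_nonneg ((δ:ℂ) + Complex.I * ε), sq_nonneg δ]

/-- limit for positive `δ` -/
lemma half_tendsto {δ : ℝ} (hδ : 0 < δ) (ε : ℝ) :
    Filter.Tendsto (fun S : ℝ => ∫ u in (0:ℝ)..S,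
        Complex.exp (-((δ:ℂ) + Complex.I * ε) * (u:ℂ)^2)) atTop
      (nhds ((↑Real.pi / ((δ:ℂ) + Complex.I * ε)) ^ (1/2 : ℂ) / 2)) := by
  have hre : 0 < ((δ:ℂ) + Complex.I * ε).re := by rw [b_re]; exact hδ
  rw [← integral_gaussian_complex_Ioi hre]
  exact intervalIntegral_tendsto_integral_Ioi 0
    (integrable_cexp_neg_mul_sq hre).integrableOn tendsto_id

/-- distance from the partial integral to the limit, for positive `δ` -/
lemma half_dist (hε : ε = 1 ∨ ε = -1) {δ : ℝ} (hδ : 0 < δ) {R : ℝ} (hR : 1 ≤ R) :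
    ‖(↑Real.pi / ((δ:ℂ) + Complex.I * ε)) ^ (1/2 : ℂ) / 2
      - ∫ u in (0:ℝ)..R, Complex.exp (-((δ:ℂ) + Complex.I * ε) * (u:ℂ)^2)‖ ≤ 1/R := by
  set b : ℂ := (δ:ℂ) + Complex.I * ε with hb
  have hre : (0:ℝ) ≤ b.re := by rw [b_re]; exact hδ.le
  have key : ∀ S : ℝ, (∫ u in R..S, Complex.exp (-b * (u:ℂ)^2))
      = (∫ u in (0:ℝ)..S, Complex.exp (-b * (u:ℂ)^2))
        - ∫ u in (0:ℝ)..R, Complex.exp (-b * (u:ℂ)^2) := by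
    intro S
    rw [eq_sub_iff_add_eq]
    rw [add_comm]
    exact intervalIntegral.integral_add_adjacent_intervals
      ((cexp_sq_cont b).intervalIntegrable 0 R) ((cexp_sq_cont b).intervalIntegrable R S)
  have htail : Filter.Tendsto (fun S : ℝ => ∫ u in R..S, Complex.exp (-b * (u:ℂ)^2)) atTop
      (nhds ((↑Real.pi / b) ^ (1/2 : ℂ) / 2 - ∫ u in (0:ℝ)..R, Complex.exp (-b * (u:ℂ)^2))) := by
    simp only [key]
    exact (half_tendsto hδ ε).sub tendsto_const_nhds
  apply le_of_tendsto htail.norm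
  filter_upwards [eventually_ge_atTop R] with S hS
  exact tail_bound hre (b_abs hε δ) hR hS

/-- continuity in `δ` at `0` -/
lemma value_tendsto (hε : ε = 1 ∨ ε = -1) :
    Filter.Tendsto (fun δ : ℝ => (↑Real.pi / ((δ:ℂ) + Complex.I * ε)) ^ (1/2 : ℂ) / 2)
      (nhdsWithin 0 (Set.Ioi 0))
      (nhds ((↑Real.pi / (Complex.I * ε)) ^ (1/2 : ℂ) / 2)) := by
  have hεne : (ε:ℂ) ≠ 0 := by
    rcases hε with h|h <;> simp [h]
  have hIε : Complex.I * ε ≠ 0 := mul_ne_zero Complex.I_ne_zero hεne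
  have hbase : (↑Real.pi / (Complex.I * ε)).im ≠ 0 := by
    have : (↑Real.pi / (Complex.I * ε)) = -Complex.I * ε * Real.pi := by
      have hε2 : (ε:ℂ)^2 = 1 := by rcases hε with h|h <;> simp [h]
      field_simp
      linear_combination (ε:ℂ)^2*Complex.I_sq - hε2
    rw [this]
    rcases hε with h|h <;>
      simp [h, Complex.mul_im, Real.pi_ne_zero]
  have hc : ContinuousAt (fun z : ℂ => ((↑Real.pi / z) ^ (1/2 : ℂ)) / 2) (Complex.I * ε) := by
    apply ContinuousAt.div_const
    apply ContinuousAt.cpow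
    · exact continuousAt_const.div continuousAt_id hIε
    · exact continuousAt_const
    · right
      exact hbase
  have hδb : Filter.Tendsto (fun δ : ℝ => (δ:ℂ) + Complex.I * ε)
      (nhdsWithin 0 (Set.Ioi 0)) (nhds (Complex.I * ε)) := by
    have : Filter.Tendsto (fun δ : ℝ => (δ:ℂ) + Complex.I * ε) (nhds 0) (nhds (Complex.I * ε)) := by
      have := (Complex.continuous_ofReal.tendsto 0).add_const (Complex.I * (ε:ℂ))
      simpa using this
    exact this.mono_left nhdsWithin_le_nhds
  exact hc.tendsto.comp hδb

end core

lemma fresnel_half {ε : ℝ} (hε : ε = 1 ∨ ε = -1) :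
    Filter.Tendsto (fun R : ℝ => ∫ u in (0:ℝ)..R,
        Complex.exp (-(Complex.I * ε) * (u:ℂ)^2)) atTop
      (nhds ((↑Real.pi / (Complex.I * ε)) ^ (1/2 : ℂ) / 2)) := by
  rw [Metric.tendsto_atTop]
  intro e he
  obtain ⟨η, hη0, hηp⟩ := (Metric.tendsto_nhdsWithin_nhds.mp (value_tendsto hε)) (e/3)
    (by linarith)
  refine ⟨max 1 (3/e), fun R hR => ?_⟩
  have hR1 : 1 ≤ R := le_trans (le_max_left _ _) hR
  have hR0 : 0 < R := lt_of_lt_of_le one_pos hR1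
  have hRe : 1/R ≤ e/3 := by
    rw [div_le_div_iff₀ hR0 (by norm_num : (0:ℝ) < 3)]
    have h3e : 3/e ≤ R := le_trans (le_max_right _ _) hR
    calc 1*3 = 3 := by ring
      _ = (3/e)*e := by field_simp
      _ ≤ R*e := by gcongr
      _ = e*R := by ring
  set δ : ℝ := min (η/2) (e/(3*(R^3+1))) with hδdef
  have hδ0 : 0 < δ := lt_min (by linarith) (by positivity)
  have hδη : δ < η := lt_of_le_of_lt (min_le_left _ _) (by linarith)
  have hδe : δ ≤ e/(3*(R^3+1)) := min_le_right _ _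
  set b : ℂ := (δ:ℂ) + Complex.I * ε with hb
  -- d1
  have hfact : ∀ u : ℝ, Complex.exp (-(Complex.I * ε) * (u:ℂ)^2) - Complex.exp (-b * (u:ℂ)^2)
      = Complex.exp (-(Complex.I * ε) * (u:ℂ)^2) * (1 - Complex.exp (-(δ:ℂ) * (u:ℂ)^2)) := by
    intro u
    rw [mul_sub, mul_one, ← Complex.exp_add]
    congr 2
    rw [hb]
    ring
  have hnorm1 : ∀ u : ℝ, ‖Complex.exp (-(Complex.I * ε) * (u:ℂ)^2)‖ = 1 := by
    intro u
    rw [Complex.norm_exp]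
    have h : (-(Complex.I * ε) * (u:ℂ)^2).re = 0 := by
      have : (-(Complex.I * ε) * (u:ℂ)^2) = -(Complex.I * ((ε * u^2 : ℝ) : ℂ)) := by
        push_cast; ring
      rw [this]
      simp [← Complex.ofReal_pow]
    rw [h, Real.exp_zero]
  have hptbd : ∀ u : ℝ, ‖Complex.exp (-(Complex.I * ε) * (u:ℂ)^2)
      - Complex.exp (-b * (u:ℂ)^2)‖ ≤ δ * u^2 := by
    intro u
    rw [hfact, norm_mul, hnorm1, one_mul]
    have hre : Complex.exp (-(δ:ℂ) * (u:ℂ)^2) = ((Real.exp (-(δ * u^2)) : ℝ) : ℂ) := by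
      rw [Complex.ofReal_exp]
      congr 1
      push_cast
      ring
    rw [hre, ← Complex.ofReal_one, ← Complex.ofReal_sub, Complex.norm_real, Real.norm_eq_abs]
    have h1 : Real.exp (-(δ*u^2)) ≤ 1 := Real.exp_le_one_iff.mpr (neg_nonpos.mpr (by positivity))
    have h2 : 1 - δ*u^2 ≤ Real.exp (-(δ*u^2)) := by
      have := Real.add_one_le_exp (-(δ*u^2))
      linarith
    rw [_root_.abs_of_nonneg (by linarith)]
    linarith
  have hd1 : dist (∫ u in (0:ℝ)..R, Complex.exp (-(Complex.I * ε) * (u:ℂ)^2))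
      (∫ u in (0:ℝ)..R, Complex.exp (-b * (u:ℂ)^2)) ≤ e/3 := by
    rw [dist_eq_norm, ← intervalIntegral.integral_sub
      ((cexp_sq_cont (Complex.I * ε)).intervalIntegrable 0 R)
      ((cexp_sq_cont b).intervalIntegrable 0 R)]
    have hIval : ∫ u in (0:ℝ)..R, δ * u^2 = δ * (R^3/3) := by
      rw [intervalIntegral.integral_const_mul, integral_pow]
      norm_num
    have := intervalIntegral.norm_integral_le_of_norm_le
      (f := fun u : ℝ => Complex.exp (-(Complex.I * ε) * (u:ℂ)^2) - Complex.exp (-b * (u:ℂ)^2))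
      (g := fun u : ℝ => δ * u^2) (μ := volume) (a := 0) (b := R)
      hR0.le (Filter.Eventually.of_forall (fun t _ => hptbd t))
      (by apply Continuous.intervalIntegrable; fun_prop)
    refine le_trans this ?_
    rw [hIval]
    calc δ * (R^3/3) ≤ (e/(3*(R^3+1))) * (R^3/3) := by gcongr
      _ ≤ e/3 := by
        rw [div_mul_eq_mul_div, div_le_div_iff₀ (by positivity) (by norm_num)]
        nlinarith [pow_pos hR0 3]
  -- d2
  have hd2 : dist (∫ u in (0:ℝ)..R, Complex.exp (-b * (u:ℂ)^2))
      ((↑Real.pi / b) ^ (1/2 : ℂ) / 2) ≤ e/3 := by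
    rw [dist_comm, dist_eq_norm]
    exact le_trans (half_dist hε hδ0 hR1) hRe
  -- d3
  have hd3 : dist ((↑Real.pi / b) ^ (1/2 : ℂ) / 2)
      ((↑Real.pi / (Complex.I * ε)) ^ (1/2 : ℂ) / 2) < e/3 := by
    apply hηp (Set.mem_Ioi.mpr hδ0)
    rw [Real.dist_eq, sub_zero, abs_of_pos hδ0]
    exact hδη
  calc dist (∫ u in (0:ℝ)..R, Complex.exp (-(Complex.I * ε) * (u:ℂ)^2))
        ((↑Real.pi / (Complex.I * ε)) ^ (1/2 : ℂ) / 2)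
      ≤ dist (∫ u in (0:ℝ)..R, Complex.exp (-(Complex.I * ε) * (u:ℂ)^2))
          (∫ u in (0:ℝ)..R, Complex.exp (-b * (u:ℂ)^2))
        + dist (∫ u in (0:ℝ)..R, Complex.exp (-b * (u:ℂ)^2))
            ((↑Real.pi / b) ^ (1/2 : ℂ) / 2)
        + dist ((↑Real.pi / b) ^ (1/2 : ℂ) / 2)
            ((↑Real.pi / (Complex.I * ε)) ^ (1/2 : ℂ) / 2) := dist_triangle4 _ _ _ _
    _ < e := by linarith

lemma log_neg_I_pi : Complex.log (-Complex.I * Real.pi) = ((Real.log Real.pi : ℝ) : ℂ)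
    - ((Real.pi/2 : ℝ) : ℂ) * Complex.I := by
  have h1 : (-Complex.I * (Real.pi:ℂ)) = ((Real.pi : ℝ) : ℂ) * (-Complex.I) := by ring
  rw [Complex.log, h1]
  have habs : ‖((Real.pi : ℝ) : ℂ) * (-Complex.I)‖ = Real.pi := by
    rw [norm_mul]
    simp [abs_of_pos Real.pi_pos]
  have harg : Complex.arg (((Real.pi : ℝ) : ℂ) * (-Complex.I)) = -(Real.pi/2) := by
    rw [Complex.arg_real_mul _ Real.pi_pos, Complex.arg_neg_I]
  rw [habs, harg]
  push_cast
  ring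

lemma log_I_pi : Complex.log (Complex.I * Real.pi) = ((Real.log Real.pi : ℝ) : ℂ)
    + ((Real.pi/2 : ℝ) : ℂ) * Complex.I := by
  have h1 : (Complex.I * (Real.pi:ℂ)) = ((Real.pi : ℝ) : ℂ) * Complex.I := by ring
  rw [Complex.log, h1]
  have habs : ‖((Real.pi : ℝ) : ℂ) * Complex.I‖ = Real.pi := by
    rw [norm_mul]
    simp [abs_of_pos Real.pi_pos]
  have harg : Complex.arg (((Real.pi : ℝ) : ℂ) * Complex.I) = Real.pi/2 := by
    rw [Complex.arg_real_mul _ Real.pi_pos, Complex.arg_I]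
  rw [habs, harg]

lemma sqrt_pi_exp : ((Real.sqrt Real.pi : ℝ) : ℂ) = Complex.exp ((Real.log Real.pi / 2 : ℝ) : ℂ) := by
  rw [← Complex.ofReal_exp]
  congr 1
  rw [Real.sqrt_eq_rpow, Real.rpow_def_of_pos Real.pi_pos]
  congr 1
  ring

lemma cpow_val {ε : ℝ} (hε : ε = 1 ∨ ε = -1) :
    (↑Real.pi / (Complex.I * ε)) ^ (1/2 : ℂ)
      = (Real.sqrt Real.pi : ℂ) * Complex.exp (-Complex.I * ε * ((Real.pi/4 : ℝ) : ℂ)) := by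
  rcases hε with h | h <;> subst h
  · have hbase : (↑Real.pi / (Complex.I * (1:ℝ))) = -Complex.I * Real.pi := by
      push_cast
      rw [div_eq_iff (by simp [Complex.I_ne_zero] : Complex.I * 1 ≠ 0)]
      linear_combination (Real.pi : ℂ) * Complex.I_sq
    rw [hbase, Complex.cpow_def_of_ne_zero (by
        simp [Complex.I_ne_zero, Complex.ofReal_ne_zero, Real.pi_ne_zero]), log_neg_I_pi]
    rw [sqrt_pi_exp, ← Complex.exp_add]
    congr 1
    push_cast
    ring
  · have hbase : (↑Real.pi / (Complex.I * ((-1:ℝ):ℂ))) = Complex.I * Real.pi := by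
      push_cast
      rw [div_eq_iff (by simp [Complex.I_ne_zero] : Complex.I * (-1:ℂ) ≠ 0)]
      linear_combination (Real.pi : ℂ) * Complex.I_sq
    rw [hbase, Complex.cpow_def_of_ne_zero (by
        simp [Complex.I_ne_zero, Complex.ofReal_ne_zero, Real.pi_ne_zero]), log_I_pi]
    rw [sqrt_pi_exp, ← Complex.exp_add]
    congr 1
    push_cast
    ring

end FresnelHelpers

/-- **Fresnel-type integral.** For every real `a` and `ε ∈ {1, -1}`, the improper
Riemann integral `lim_{R→∞} ∫_{-R}^{R} e^{i a η - i ε η²} dη` exists and equals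
`√π · e^{-iεπ/4} · e^{iεa²/4}`. -/
theorem fresnel_integral (a ε : ℝ) (hε : ε = 1 ∨ ε = -1) :
    Tendsto
      (fun R : ℝ => ∫ η in (-R)..R,
        Complex.exp (Complex.I * ((a * η : ℝ) : ℂ) - Complex.I * (ε : ℂ) * (η : ℂ) ^ 2))
      atTop
      (nhds ((Real.sqrt Real.pi : ℂ) *
        Complex.exp (-Complex.I * (ε : ℂ) * ((Real.pi / 4 : ℝ) : ℂ)) *
        Complex.exp (Complex.I * (ε : ℂ) * ((a ^ 2 / 4 : ℝ) : ℂ)))) := by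
  set c : ℝ := ε * a / 2 with hc
  set f : ℝ → ℂ := fun u => Complex.exp (-(Complex.I * ε) * (u:ℂ)^2) with hf
  have hε2c : ((ε:ℂ))^2 = 1 := by rcases hε with h|h <;> simp [h]
  set K : ℂ := Complex.exp (Complex.I * (ε : ℂ) * ((a ^ 2 / 4 : ℝ) : ℂ)) with hK
  have hint : ∀ η : ℝ, Complex.I * ((a * η : ℝ) : ℂ) - Complex.I * (ε : ℂ) * (η : ℂ) ^ 2
      = -(Complex.I * ε) * (((η - c : ℝ) : ℂ))^2 + Complex.I * (ε : ℂ) * ((a ^ 2 / 4 : ℝ) : ℂ) := by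
    intro η
    rw [hc]
    push_cast
    linear_combination (Complex.I * ((ε:ℂ) * (a:ℂ)^2/4 - (a:ℂ) * (η:ℂ))) * hε2c
  have hexp : ∀ η : ℝ, Complex.exp (Complex.I * ((a * η : ℝ) : ℂ)
        - Complex.I * (ε : ℂ) * (η : ℂ) ^ 2) = f (η - c) * K := by
    intro η
    rw [hf, hK, ← Complex.exp_add, hint η]
  have heven : ∀ x : ℝ, f (-x) = f x := by
    intro x
    rw [hf]
    push_cast
    ring_nf
  have hrw : ∀ R : ℝ, (∫ η in (-R)..R,
      Complex.exp (Complex.I * ((a * η : ℝ) : ℂ) - Complex.I * (ε : ℂ) * (η : ℂ) ^ 2))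
      = ((∫ u in (0:ℝ)..(R + c), f u) + ∫ u in (0:ℝ)..(R - c), f u) * K := by
    intro R
    simp only [hexp]
    rw [intervalIntegral.integral_mul_const]
    congr 1
    rw [intervalIntegral.integral_comp_sub_right (a := -R) (b := R) f c]
    have hsplit : (∫ u in (-R - c)..(R - c), f u)
        = (∫ u in (-R - c)..(0:ℝ), f u) + ∫ u in (0:ℝ)..(R - c), f u :=
      (intervalIntegral.integral_add_adjacent_intervals
        ((cexp_sq_cont (Complex.I * ε)).intervalIntegrable _ _)
        ((cexp_sq_cont (Complex.I * ε)).intervalIntegrable _ _)).symm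
    rw [hsplit]
    congr 1
    have := intervalIntegral.integral_comp_neg (a := (0:ℝ)) (b := R + c) (f := f)
    simp only [heven] at this
    rw [this]
    congr 1
    · ring
    · ring
  simp only [hrw]
  have h1 : Filter.Tendsto (fun R : ℝ => R + c) atTop atTop :=
    tendsto_atTop_add_const_right _ c tendsto_id
  have h2 : Filter.Tendsto (fun R : ℝ => R - c) atTop atTop :=
    tendsto_atTop_add_const_right _ (-c) tendsto_id
  have hsum := (((fresnel_half hε).comp h1).add ((fresnel_half hε).comp h2)).mul_const K
  have hval : ((↑Real.pi / (Complex.I * ε)) ^ (1/2 : ℂ) / 2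
      + (↑Real.pi / (Complex.I * ε)) ^ (1/2 : ℂ) / 2) * K
      = (Real.sqrt Real.pi : ℂ) *
        Complex.exp (-Complex.I * (ε : ℂ) * ((Real.pi / 4 : ℝ) : ℂ)) * K := by
    rw [← cpow_val hε]
    ring
  rw [hval] at hsum
  exact hsum
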